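/- Let A be the localization of ℤ at the multiplicative set generated by 2 and the primes congruent to 1 modulo 4. Then for every b ∈ A, the element b² + 1 is a unit of A. In particular, the polynomial Y² + 1 ∈ A[Y] is nonconstant but Y² + 1 takes only unit values on A, so A does not satisfy condition (P2). -/

import Mathlib

/-- The multiplicative set of `ℤ` generated by `2` and the primes congruent to `1` mod `4`. -/
def sigmaSet : Submonoid ℤ :=
  Submonoid.closure {x : ℤ | x = 2 ∨ ∃ p : ℕ, p.Prime ∧ p % 4 = 1 ∧ x = (p : ℤ)}

/-- Members of `sigmaSet` are positive and all their prime divisors are `2` or `≡ 1 mod 4`. -/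
lemma sigmaSet_pos_and_primes {x : ℤ} (hx : x ∈ sigmaSet) :
    0 < x ∧ ∀ p : ℕ, p.Prime → (p : ℤ) ∣ x → p = 2 ∨ p % 4 = 1 := by
  induction hx using Submonoid.closure_induction with
  | mem y hy =>
    rcases hy with rfl | ⟨q, hq, hq4, rfl⟩
    · refine ⟨by norm_num, fun p hp hpd => ?_⟩
      left
      have : (p : ℤ) ∣ (2 : ℕ) := by exact_mod_cast hpd
      have := (Nat.prime_dvd_prime_iff_eq hp Nat.prime_two).mp (by exact_mod_cast this)
      exact this
    · refine ⟨by exact_mod_cast hq.pos, fun p hp hpd => ?_⟩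
      right
      have : p ∣ q := by exact_mod_cast hpd
      rw [(Nat.prime_dvd_prime_iff_eq hp hq).mp this]; exact hq4
  | one => exact ⟨one_pos, fun p hp hpd => (by
      have h1 := isUnit_of_dvd_one hpd
      rw [Int.isUnit_iff] at h1
      have h2 := hp.two_le
      omega)⟩
  | mul y z _ _ hy hz =>
    refine ⟨mul_pos hy.1 hz.1, fun p hp hpd => ?_⟩
    rcases (Nat.prime_iff_prime_int.mp hp).2.2 y z hpd with h | h
    · exact hy.2 p hp h
    · exact hz.2 p hp h

/-- A positive natural number all of whose prime factors are `2` or `≡ 1 mod 4` is in `sigmaSet`. -/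
lemma mem_sigmaSet_of_primes {n : ℕ} (hn : 0 < n)
    (h : ∀ p : ℕ, p.Prime → p ∣ n → p = 2 ∨ p % 4 = 1) : (n : ℤ) ∈ sigmaSet := by
  induction n using Nat.strong_induction_on with
  | _ n ih =>
    rcases eq_or_ne n 1 with rfl | hn1
    · simpa using one_mem sigmaSet
    · obtain ⟨p, hp, hpd⟩ := Nat.exists_prime_and_dvd hn1
      obtain ⟨m, rfl⟩ := hpd
      have hm : 0 < m := Nat.pos_of_mul_pos_left (by rwa [mul_comm] at hn)
      have hpS : (p : ℤ) ∈ sigmaSet := by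
        apply Submonoid.subset_closure
        rcases h p hp ⟨m, rfl⟩ with h2 | h1
        · left; rw [h2]; norm_num
        · right; exact ⟨p, hp, h1, rfl⟩
      have hmS : (m : ℤ) ∈ sigmaSet := by
        apply ih m ?_ hm
        · exact fun q hq hqd => h q hq (Dvd.dvd.mul_left hqd p)
        · calc m = 1 * m := (one_mul m).symm
            _ < p * m := by exact (Nat.mul_lt_mul_right hm).mpr hp.one_lt
      have := mul_mem hpS hmS
      rwa [← Nat.cast_mul] at this

lemma key (r s : ℤ) (hs : s ∈ sigmaSet) : (r ^ 2 + s ^ 2 : ℤ) ∈ sigmaSet := by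
  have hspos := (sigmaSet_pos_and_primes hs).1
  have hsne : s ≠ 0 := hspos.ne'
  set g : ℕ := Int.gcd r s with hg
  have hgpos : 0 < g := Int.gcd_pos_of_ne_zero_right r hsne
  obtain ⟨r', hr'⟩ : (g : ℤ) ∣ r := Int.gcd_dvd_left r s
  obtain ⟨s', hs'⟩ : (g : ℤ) ∣ s := Int.gcd_dvd_right r s
  have hcop : IsCoprime r' s' := by
    rw [Int.isCoprime_iff_gcd_eq_one]
    have h1 : r' = r / g := by rw [hr']; exact (Int.mul_ediv_cancel_left _ (by omega)).symm
    have h2 : s' = s / g := by rw [hs']; exact (Int.mul_ediv_cancel_left _ (by omega)).symm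
    rw [h1, h2]
    exact Int.gcd_div_gcd_div_gcd hgpos
  have heq : r ^ 2 + s ^ 2 = (g : ℤ) * g * (r' ^ 2 + s' ^ 2) := by rw [hr', hs']; ring
  have hs'pos : 0 < r' ^ 2 + s' ^ 2 := by
    have : s' ≠ 0 := fun h => hsne (by simp [hs', h])
    positivity
  -- g² is in sigmaSet: every prime dividing g divides s
  have hgmem : ((g : ℤ)) ∈ sigmaSet := by
    have := mem_sigmaSet_of_primes hgpos (fun p hp hpd => by
      refine (sigmaSet_pos_and_primes hs).2 p hp ?_
      exact dvd_trans (by exact_mod_cast hpd) ⟨s', hs'⟩)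
    exact this
  have hsum : (r' ^ 2 + s' ^ 2 : ℤ) ∈ sigmaSet := by
    have hnat : ((r' ^ 2 + s' ^ 2).natAbs : ℤ) = r' ^ 2 + s' ^ 2 :=
      Int.natAbs_of_nonneg hs'pos.le
    rw [← hnat]
    apply mem_sigmaSet_of_primes
    · omega
    · intro p hp hpd
      have hp4 : p % 4 ≠ 3 := by
        refine Nat.mod_four_ne_three_of_mem_primeFactors_of_isSquare_neg_one (Nat.mem_primeFactors.mpr ⟨hp, hpd, by omega⟩) ?_
        exact ZMod.isSquare_neg_one_of_eq_sq_add_sq_of_isCoprime rfl hcop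
      rcases hp.eq_two_or_odd' with h2 | hodd
      · exact Or.inl h2
      · right
        have := Nat.odd_iff.mp hodd
        omega
  rw [heq]
  exact mul_mem (mul_mem hgmem hgmem) hsum

theorem stmt_15 :
    (∀ b : Localization sigmaSet, IsUnit (b ^ 2 + 1)) ∧
    (0 < (Polynomial.X ^ 2 + 1 : Polynomial (Localization sigmaSet)).natDegree) ∧
    ¬ (∀ F : Polynomial (Localization sigmaSet), 0 < F.natDegree →
        ∃ b : Localization sigmaSet, ¬ IsUnit (F.eval b)) := by
  have h0 : (0 : ℤ) ∉ sigmaSet := fun h => absurd (sigmaSet_pos_and_primes h).1 (lt_irrefl 0)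
  have hle : sigmaSet ≤ nonZeroDivisors ℤ := fun x hx =>
    mem_nonZeroDivisors_of_ne_zero (sigmaSet_pos_and_primes hx).1.ne'
  haveI : IsDomain (Localization sigmaSet) := IsLocalization.isDomain_localization hle
  have main : ∀ b : Localization sigmaSet, IsUnit (b ^ 2 + 1) := by
    intro b
    induction b using Localization.induction_on with
    | H x =>
    obtain ⟨r, s⟩ := x
    simp only
    have hb : Localization.mk r s ^ 2 + 1 =
        Localization.mk (r ^ 2 + (s : ℤ) ^ 2) (s * s) := by
      rw [pow_two, Localization.mk_mul, ← Localization.mk_one, Localization.add_mk]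
      congr 1
      · push_cast; ring
      · simp [mul_comm]
    rw [hb]
    have hmem : (r ^ 2 + (s : ℤ) ^ 2) ∈ sigmaSet := key r s s.2
    refine IsUnit.of_mul_eq_one (Localization.mk (s * s) ⟨_, hmem⟩) ?_
    rw [Localization.mk_mul]
    rw [mul_comm]
    exact Localization.mk_self (s * s * ⟨_, hmem⟩)
  refine ⟨main, ?_, ?_⟩
  · have : (Polynomial.X ^ 2 + 1 : Polynomial (Localization sigmaSet)).natDegree = 2 := by
      compute_degree!
    omega
  · intro H
    obtain ⟨b, hb⟩ := H (Polynomial.X ^ 2 + 1) (by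
      have : (Polynomial.X ^ 2 + 1 : Polynomial (Localization sigmaSet)).natDegree = 2 := by
        compute_degree!
      omega)
    apply hb
    simpa using main b
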